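/- arXiv:2605.24141 — 3 statements merged into one kernel-verified Lean document; each statement's English description precedes it below -/
import Mathlib

section
/- Let G be a topological group acting continuously on a compact space X, and let (Y,d) be a metric space with a subset A homotopy dense in Y. Equip C(X,Y) with the G-action (g·f)(x) = f(g⁻¹x). Then C(X,A) is G-homotopy dense in C(X,Y): there is a continuous G-equivariant homotopy K : C(X,Y) × [0,1] → C(X,Y) with K(p,0)=p and K(p,t) ∈ C(X,A) for t > 0. -/
open unitInterval

/-- The action of `G` on `C(X,Y)` given by `(g • f)(x) = f (g⁻¹ • x)`. -/
noncomputable def gsmul {G X Y : Type*} [Group G] [TopologicalSpace G] [TopologicalSpace X]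
    [MulAction G X] [ContinuousSMul G X] [TopologicalSpace Y] (g : G) (p : C(X, Y)) : C(X, Y) :=
  p.comp ⟨fun x => g⁻¹ • x, continuous_const_smul _⟩

theorem stmt5 {G X Y : Type*} [Group G] [TopologicalSpace G] [IsTopologicalGroup G]
    [TopologicalSpace X] [CompactSpace X] [MulAction G X] [ContinuousSMul G X]
    [MetricSpace Y] (A : Set Y) (F : Y × I → Y) (hF : Continuous F)
    (hF0 : ∀ y, F (y, 0) = y) (hFA : ∀ y (t : I), t ≠ 0 → F (y, t) ∈ A) :
    ∃ K : C(X, Y) × I → C(X, Y), Continuous K ∧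
      (∀ p, K (p, 0) = p) ∧ (∀ p (t : I), t ≠ 0 → ∀ x, K (p, t) x ∈ A) ∧
      ∀ (g : G) (p : C(X, Y)) (t : I), K (gsmul g p, t) = gsmul g (K (p, t)) := by
  refine ⟨fun pt => (⟨F, hF⟩ : C(Y × I, Y)).comp
      (pt.1.prodMk (ContinuousMap.const X pt.2)), ?_, ?_, ?_, ?_⟩
  · have hΦ : LipschitzWith 1 (fun pt : C(X, Y) × I =>
        (pt.1.prodMk (ContinuousMap.const X pt.2) : C(X, Y × I))) := by
      refine LipschitzWith.of_dist_le_mul fun a b => ?_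
      rw [NNReal.coe_one, one_mul]
      refine (ContinuousMap.dist_le dist_nonneg).2 fun x => ?_
      rw [Prod.dist_eq, Prod.dist_eq]
      exact max_le_max (ContinuousMap.dist_apply_le_dist x) le_rfl
    exact (ContinuousMap.continuous_postcomp _).comp hΦ.continuous
  · intro p
    ext x
    exact hF0 (p x)
  · intro p t ht x
    exact hFA (p x) t ht
  · intro g p t
    rfl
end

section
/- Let (S,d,·) be a metric semilattice with d(ab,a'b') ≤ max{d(a,a'),d(b,b')}. Let F(S) denote the set of nonempty finite subsets of S with the Hausdorff metric d_H. Then the map r : F(S) → S defined by r({s_1,…,s_n}) = s_1 · s_2 ⋯ s_n (the product of all elements, well-defined by commutativity and associativity) satisfies d(r(A), r(B)) ≤ d_H(A,B) for all A, B ∈ F(S); in particular r is 1-Lipschitz, continuous, and is a retraction onto S (identifying s with {s}). -/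
private lemma supLip {S : Type*} [MetricSpace S] [SemilatticeSup S]
    (hd : ∀ a b a' b' : S, dist (a ⊔ b) (a' ⊔ b') ≤ max (dist a a') (dist b b'))
    (I : Finset S) (hI : I.Nonempty) (f g : S → S) (r : ℝ)
    (hr : ∀ i ∈ I, dist (f i) (g i) ≤ r) :
    dist (I.sup' hI f) (I.sup' hI g) ≤ r := by
  induction hI using Finset.Nonempty.cons_induction with
  | singleton a => simpa using hr a (by simp)
  | cons a s ha hs ih =>
    rw [Finset.sup'_cons, Finset.sup'_cons]
    refine le_trans (hd _ _ _ _) (max_le (hr a (by simp)) ?_)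
    exact ih fun i hi => hr i (Finset.mem_cons_of_mem hi)

theorem stmt11 {S : Type*} [MetricSpace S] [SemilatticeSup S]
    (hd : ∀ a b a' b' : S, dist (a ⊔ b) (a' ⊔ b') ≤ max (dist a a') (dist b b')) :
    (∀ (A B : Finset S) (hA : A.Nonempty) (hB : B.Nonempty),
      dist (A.sup' hA id) (B.sup' hB id) ≤ Metric.hausdorffDist (A : Set S) (B : Set S)) ∧
    ∀ s : S, ({s} : Finset S).sup' (Finset.singleton_nonempty s) id = s := by
  constructor
  · intro A B hA hB
    classical
    set H := Metric.hausdorffDist (A : Set S) (B : Set S) with hHdef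
    have hAne : (A : Set S).Nonempty := by exact_mod_cast hA
    have hBne : (B : Set S).Nonempty := by exact_mod_cast hB
    have hne : EMetric.hausdorffEdist (A : Set S) (B : Set S) ≠ ⊤ :=
      Metric.hausdorffEdist_ne_top_of_nonempty_of_bounded hAne hBne
        A.finite_toSet.isBounded B.finite_toSet.isBounded
    have hφ : ∀ x : S, ∃ y : S, x ∈ B → y ∈ A ∧ dist x y ≤ H := by
      intro x
      by_cases hx : x ∈ B
      · have h1 : Metric.infDist x (A : Set S) ≤ H := by
          rw [hHdef, Metric.hausdorffDist_comm]
          exact Metric.infDist_le_hausdorffDist_of_mem (by exact_mod_cast hx)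
            (by rw [EMetric.hausdorffEdist_comm]; exact hne)
        obtain ⟨y, hyA, hy⟩ := A.finite_toSet.isCompact.exists_infDist_eq_dist hAne x
        exact ⟨y, fun _ => ⟨by exact_mod_cast hyA, by rw [← hy]; exact h1⟩⟩
      · exact ⟨x, fun h => absurd h hx⟩
    have hψ : ∀ x : S, ∃ y : S, x ∈ A → y ∈ B ∧ dist x y ≤ H := by
      intro x
      by_cases hx : x ∈ A
      · have h1 : Metric.infDist x (B : Set S) ≤ H :=
          Metric.infDist_le_hausdorffDist_of_mem (by exact_mod_cast hx) hne
        obtain ⟨y, hyB, hy⟩ := B.finite_toSet.isCompact.exists_infDist_eq_dist hBne x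
        exact ⟨y, fun _ => ⟨by exact_mod_cast hyB, by rw [← hy]; exact h1⟩⟩
      · exact ⟨x, fun h => absurd h hx⟩
    choose φ hφ using hφ
    choose ψ hψ using hψ
    set I : Finset S := A ∪ B with hIdef
    have hI : I.Nonempty := hA.mono Finset.subset_union_left
    set f : S → S := fun i => if i ∈ A then i else φ i with hfdef
    set g : S → S := fun i => if i ∈ B then i else ψ i with hgdef
    have hEA : I.sup' hI f = A.sup' hA id := by
      apply le_antisymm
      · apply Finset.sup'_le
        intro i hi
        have hif : f i ∈ A := by
          by_cases h : i ∈ A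
          · simp [hfdef, h]
          · have hiB : i ∈ B := by
              rcases Finset.mem_union.1 hi with h' | h'
              · exact absurd h' h
              · exact h'
            simpa [hfdef, h] using (hφ i hiB).1
        exact Finset.le_sup' id hif
      · apply Finset.sup'_le
        intro a haA
        have : f a = a := by simp [hfdef, haA]
        calc id a = f a := this.symm
        _ ≤ I.sup' hI f := Finset.le_sup' f (Finset.mem_union_left _ haA)
    have hEB : I.sup' hI g = B.sup' hB id := by
      apply le_antisymm
      · apply Finset.sup'_le
        intro i hi
        have hig : g i ∈ B := by
          by_cases h : i ∈ B
          · simp [hgdef, h]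
          · have hiA : i ∈ A := by
              rcases Finset.mem_union.1 hi with h' | h'
              · exact h'
              · exact absurd h' h
            simpa [hgdef, h] using (hψ i hiA).1
        exact Finset.le_sup' id hig
      · apply Finset.sup'_le
        intro b hbB
        have : g b = b := by simp [hgdef, hbB]
        calc id b = g b := this.symm
        _ ≤ I.sup' hI g := Finset.le_sup' g (Finset.mem_union_right _ hbB)
    rw [← hEA, ← hEB]
    apply supLip hd
    intro i hi
    have hH0 : 0 ≤ H := Metric.hausdorffDist_nonneg
    rcases Finset.mem_union.1 hi with hiA | hiB
    · by_cases hiB : i ∈ B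
      · simp [hfdef, hgdef, hiA, hiB, hH0]
      · simpa [hfdef, hgdef, hiA, hiB] using (hψ i hiA).2
    · by_cases hiA : i ∈ A
      · simp [hfdef, hgdef, hiA, hiB, hH0]
      · have := (hφ i hiB).2
        simpa [hfdef, hgdef, hiA, hiB, dist_comm] using this
  · intro s; simp
end

section
/- Let G be a compact topological group acting continuously and linearly on a finite-dimensional normed real vector space L, and let V ⊆ L be a convex G-invariant subset. Then the closure of V contains a G-fixed point v lying in the relative interior of V, and the map H(x,t) = (1−t)x + tv is a G-equivariant homotopy from the identity on the closure of V witnessing that V is G-homotopy dense in its closure (H(x,t) ∈ V for all x in the closure of V and t ∈ (0,1]). -/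
open MeasureTheory Metric Set Pointwise

theorem aux_avg {G L : Type*} [Group G] [TopologicalSpace G] [IsTopologicalGroup G]
    [CompactSpace G] [NormedAddCommGroup L] [NormedSpace ℝ L] [FiniteDimensional ℝ L]
    [DistribMulAction G L] [SMulCommClass G ℝ L] [ContinuousSMul G L] (w : L) :
    ∃ v ∈ closure (convexHull ℝ (Set.range fun g : G => g • w)), ∀ h : G, h • v = v := by
  letI : MeasurableSpace G := borel G
  haveI : BorelSpace G := ⟨rfl⟩
  let μ : Measure G := Measure.haarMeasure ⊤
  haveI : IsProbabilityMeasure μ := ⟨by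
    simpa using Measure.haarMeasure_self (K₀ := (⊤ : TopologicalSpace.PositiveCompacts G))⟩
  have cont : Continuous fun g : G => g • w := continuous_id.smul continuous_const
  have hint : Integrable (fun g : G => g • w) μ := cont.integrable_of_hasCompactSupport
    (HasCompactSupport.of_compactSpace _)
  refine ⟨∫ g, g • w ∂μ, ?_, ?_⟩
  · exact ((convex_convexHull ℝ _).closure).integral_mem isClosed_closure
      (Filter.Eventually.of_forall fun g => subset_closure (subset_convexHull ℝ _ ⟨g, rfl⟩)) hint
  · intro h
    let c : L →L[ℝ] L := LinearMap.toContinuousLinearMap (DistribMulAction.toLinearMap ℝ L h)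
    have hc : ∀ x : L, c x = h • x := fun x => rfl
    calc h • ∫ g, g • w ∂μ = c (∫ g, g • w ∂μ) := rfl
      _ = ∫ g, c (g • w) ∂μ := (c.integral_comp_comm hint).symm
      _ = ∫ g, (h * g) • w ∂μ := by simp [hc, mul_smul]
      _ = ∫ g, g • w ∂μ := integral_mul_left_eq_self (fun g : G => g • w) h

theorem aux_hull {E : Type*} [NormedAddCommGroup E] [NormedSpace ℝ E] {K U : Set E}
    (hK : IsCompact K) (hUo : IsOpen U) (hUc : Convex ℝ U) (hKU : K ⊆ U) :
    closure (convexHull ℝ K) ⊆ U := by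
  rcases K.eq_empty_or_nonempty with rfl | hne
  · simp
  obtain ⟨δ, hδ, hth⟩ := hK.exists_thickening_subset_open hUo hKU
  have h1 : closure (convexHull ℝ K) ⊆ thickening δ (convexHull ℝ K) :=
    closure_subset_thickening hδ _
  have h2 : thickening δ (convexHull ℝ K) = convexHull ℝ K + ball (0:E) δ :=
    (add_ball_zero _ _).symm
  have h3 : convexHull ℝ K + ball (0:E) δ = convexHull ℝ (K + ball (0:E) δ) := by
    rw [convexHull_add, (convex_ball 0 δ).convexHull_eq]
  refine h1.trans ?_
  rw [h2, h3, add_ball_zero]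
  exact (convexHull_min hth hUc)

theorem aux_congr {E : Type*} [TopologicalSpace E] {s t : Set E} (h : s = t) (W : Set E) :
    Subtype.val '' interior ((Subtype.val : s → E) ⁻¹' W)
      = Subtype.val '' interior ((Subtype.val : t → E) ⁻¹' W) := by subst h; rfl

theorem stmt14 {G L : Type*} [Group G] [TopologicalSpace G] [IsTopologicalGroup G]
    [CompactSpace G] [NormedAddCommGroup L] [NormedSpace ℝ L] [FiniteDimensional ℝ L]
    [DistribMulAction G L] [SMulCommClass G ℝ L] [ContinuousSMul G L]
    (V : Set L) (hV : Convex ℝ V) (hne : V.Nonempty)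
    (hinv : ∀ (g : G), ∀ v ∈ V, g • v ∈ V) :
    ∃ v ∈ intrinsicInterior ℝ V, (∀ g : G, g • v = v) ∧
      (Continuous fun p : L × ℝ => (1 - p.2) • p.1 + p.2 • v) ∧
      (∀ x : L, (1 - (0 : ℝ)) • x + (0 : ℝ) • v = x) ∧
      (∀ x ∈ closure V, ∀ t ∈ Set.Ioc (0 : ℝ) 1, (1 - t) • x + t • v ∈ V) ∧
      ∀ (g : G) (x : L) (t : ℝ), (1 - t) • (g • x) + t • v = g • ((1 - t) • x + t • v) := by
  classical
  obtain ⟨w₀, hw₀⟩ := hne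
  obtain ⟨v₀, hv₀mem, hv₀fix⟩ := aux_avg (G := G) w₀
  have horb₀ : Set.range (fun g : G => g • w₀) ⊆ V := by rintro _ ⟨g, rfl⟩; exact hinv g _ hw₀
  have hv₀cl : v₀ ∈ closure V := closure_mono (convexHull_min horb₀ hV) hv₀mem
  have hv₀span : v₀ ∈ affineSpan ℝ V := by
    have h1 : closure V ⊆ closure (affineSpan ℝ V : Set L) :=
      closure_mono (subset_affineSpan ℝ V)
    rw [IsClosed.closure_eq (affineSpan ℝ V).closed_of_finiteDimensional] at h1
    exact h1 hv₀cl
  set W : Set L := (fun x => -v₀ + x) '' V with hWdef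
  have hmemW : ∀ x : L, x ∈ W ↔ v₀ + x ∈ V := by
    intro x
    constructor
    · rintro ⟨y, hy, rfl⟩; simpa using hy
    · intro hx; exact ⟨v₀ + x, hx, neg_add_cancel_left v₀ x⟩
  have hWconv : Convex ℝ W := hV.translate (-v₀)
  have hWsub : ∀ g : G, ∀ x ∈ W, g • x ∈ W := by
    rintro g x ⟨y, hy, rfl⟩
    refine ⟨g • y, hinv g y hy, ?_⟩
    rw [smul_add, smul_neg, hv₀fix g]
  have h0W : (0 : L) ∈ affineSpan ℝ W := by
    have hle : affineSpan ℝ V ≤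
        (affineSpan ℝ W).comap (AffineEquiv.constVAdd ℝ L (-v₀)).toAffineMap := by
      refine affineSpan_le.2 fun x hx => ?_
      refine AffineSubspace.mem_comap.2 ?_
      refine subset_affineSpan ℝ W ⟨x, hx, ?_⟩
      rfl
    have h2 := hle hv₀span
    have h3 : (AffineEquiv.constVAdd ℝ L (-v₀)) v₀ ∈ affineSpan ℝ W := h2
    rwa [show (AffineEquiv.constVAdd ℝ L (-v₀)) v₀ = 0 from neg_add_cancel v₀] at h3
  have hspan_eq : (affineSpan ℝ W : Set L) = (Submodule.span ℝ W : Set L) := by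
    have h3 := affineSpan_insert_zero (k := ℝ) W
    rwa [affineSpan_insert_eq_affineSpan (k := ℝ) h0W] at h3
  set S : Submodule ℝ L := Submodule.span ℝ W with hSdef
  have hWS : W ⊆ (S : Set L) := Submodule.subset_span
  have hS : ∀ (g : G) (x : L), x ∈ S → g • x ∈ S := by
    intro g x hx
    have hmap : Submodule.map (DistribMulAction.toLinearMap ℝ L g) S ≤ S := by
      rw [hSdef, Submodule.map_span]
      refine Submodule.span_le.2 ?_
      rintro _ ⟨z, hz, rfl⟩
      exact hWS (hWsub g z hz)
    exact hmap ⟨x, hx, rfl⟩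
  letI : SMul G S := ⟨fun g x => ⟨g • (x : L), hS g _ x.2⟩⟩
  have hsval : ∀ (g : G) (x : S), ((g • x : S) : L) = g • (x : L) := fun _ _ => rfl
  letI : MulAction G S :=
    { one_smul := fun x => Subtype.ext (by rw [hsval]; exact one_smul G (x : L))
      mul_smul := fun g h x => Subtype.ext (by simp only [hsval]; exact mul_smul g h (x : L)) }
  letI : DistribMulAction G S :=
    { smul_zero := fun g => Subtype.ext (by simp only [hsval, Submodule.coe_zero, smul_zero])
      smul_add := fun g x y => Subtype.ext (by
        simp only [hsval, Submodule.coe_add, smul_add]) }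
  letI : SMulCommClass G ℝ S := ⟨fun g r x => Subtype.ext (by
    simp only [hsval, SetLike.val_smul]
    exact smul_comm g r (x : L))⟩
  letI : ContinuousSMul G S := ⟨by
    apply Continuous.subtype_mk
    exact continuous_fst.smul (continuous_subtype_val.comp continuous_snd)⟩
  set W'' : Set S := (Subtype.val) ⁻¹' W with hW''def
  have hW''conv : Convex ℝ W'' := hWconv.linear_preimage (S.subtype)
  have hKL : intrinsicInterior ℝ V = (fun x => v₀ + x) '' (Subtype.val '' interior W'') := by
    have h1 : intrinsicInterior ℝ W = Subtype.val '' interior W'' := by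
      rw [show intrinsicInterior ℝ W
          = Subtype.val '' interior ((Subtype.val : (affineSpan ℝ W : Set L) → L) ⁻¹' W) from rfl,
        aux_congr hspan_eq]
      rfl
    have h2 : (AffineIsometryEquiv.constVAdd ℝ L v₀).toAffineIsometry '' W = V := by
      ext x
      simp only [Set.mem_image]
      constructor
      · rintro ⟨y, hy, rfl⟩
        simpa [AffineIsometryEquiv.coe_constVAdd, vadd_eq_add] using (hmemW y).1 hy
      · intro hx
        refine ⟨-v₀ + x, ⟨x, hx, rfl⟩, ?_⟩
        simp [AffineIsometryEquiv.coe_constVAdd, vadd_eq_add]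
    calc intrinsicInterior ℝ V
        = intrinsicInterior ℝ ((AffineIsometryEquiv.constVAdd ℝ L v₀).toAffineIsometry '' W) := by
          rw [h2]
      _ = (AffineIsometryEquiv.constVAdd ℝ L v₀).toAffineIsometry '' intrinsicInterior ℝ W :=
          AffineIsometry.image_intrinsicInterior _ _
      _ = (fun x => v₀ + x) '' (Subtype.val '' interior W'') := by
          rw [h1]
          exact Set.image_congr'
            (fun y => by simp [AffineIsometryEquiv.coe_constVAdd, vadd_eq_add])
  obtain ⟨z, hz⟩ := Set.Nonempty.intrinsicInterior hV ⟨w₀, hw₀⟩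
  rw [hKL] at hz
  obtain ⟨y, hy, rfl⟩ := hz
  obtain ⟨w, hwU, rfl⟩ := hy
  have hinvU : ∀ (g : G) (x : S), x ∈ interior W'' → g • x ∈ interior W'' := by
    intro g x hx
    let e : S ≃ₜ S :=
      { toFun := fun y => g • y
        invFun := fun y => g⁻¹ • y
        left_inv := fun y => inv_smul_smul g y
        right_inv := fun y => smul_inv_smul g y
        continuous_toFun := (continuous_const : Continuous fun _ : S => g).smul continuous_id
        continuous_invFun := (continuous_const : Continuous fun _ : S => g⁻¹).smul continuous_id }
    have hpre : e ⁻¹' W'' = W'' := by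
      ext y
      constructor
      · intro hy
        have : g⁻¹ • (g • (y : L)) ∈ W := hWsub g⁻¹ _ hy
        exact (by simpa [inv_smul_smul] using this : (y : L) ∈ W)
      · intro hy
        exact hWsub g _ hy
    have himg : x ∈ e ⁻¹' interior W'' := by
      rw [e.preimage_interior, hpre]
      exact hx
    exact himg
  obtain ⟨v₁, hv₁mem, hv₁fix⟩ := aux_avg (G := G) (L := S) w
  have horbK : IsCompact (Set.range fun g : G => g • w) :=
    isCompact_range (continuous_id.smul continuous_const)
  have hv₁U : v₁ ∈ interior W'' := by
    refine aux_hull horbK isOpen_interior hW''conv.interior ?_ hv₁mem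
    rintro _ ⟨g, rfl⟩
    exact hinvU g w hwU
  refine ⟨v₀ + (v₁ : L), ?_, ?_, ?_, ?_, ?_, ?_⟩
  · rw [hKL]
    exact ⟨(v₁ : L), ⟨v₁, hv₁U, rfl⟩, rfl⟩
  · intro g
    rw [smul_add, hv₀fix g, ← hsval g v₁, hv₁fix g]
  · exact ((continuous_const.sub continuous_snd).smul continuous_fst).add
      (continuous_snd.smul continuous_const)
  · intro x; simp
  · intro x hx t ht
    have hfix : ∀ g : G, g • (v₀ + (v₁ : L)) = v₀ + (v₁ : L) := by
      intro g
      rw [smul_add, hv₀fix g, ← hsval g v₁, hv₁fix g]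
    have hclW : closure W = (fun y => -v₀ + y) '' closure V := by
      have := (Homeomorph.addLeft (-v₀)).image_closure V
      simpa [hWdef] using this.symm
    have hxW : -v₀ + x ∈ closure W := by
      rw [hclW]; exact ⟨x, hx, rfl⟩
    have hx1S : -v₀ + x ∈ S := by
      have hSc : IsClosed (S : Set L) := S.closed_of_finiteDimensional
      have : closure W ⊆ (S : Set L) := hSc.closure_subset_iff.2 hWS
      exact this hxW
    set x' : S := ⟨-v₀ + x, hx1S⟩ with hx'def
    have hx'cl : x' ∈ closure W'' := by
      rw [closure_subtype]
      have himg : Subtype.val '' W'' = W := by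
        apply Set.Subset.antisymm
        · rintro _ ⟨z, hz, rfl⟩; exact hz
        · intro y hy; exact ⟨⟨y, hWS hy⟩, hy, rfl⟩
      rw [himg]
      exact hxW
    have hcombo : t • v₁ + (1 - t) • x' ∈ interior W'' :=
      hW''conv.combo_interior_closure_mem_interior hv₁U hx'cl ht.1 (by linarith [ht.2])
        (by ring)
    have hWmem3 : ((t • v₁ + (1 - t) • x' : S) : L) ∈ W :=
      interior_subset (s := W'') hcombo
    have hmem2 : v₀ + ((t • v₁ + (1 - t) • x' : S) : L) ∈ V := (hmemW _).1 hWmem3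
    have hcoe : ((t • v₁ + (1 - t) • x' : S) : L) = t • (v₁ : L) + (1 - t) • (-v₀ + x) := by
      push_cast
      rfl
    rw [hcoe] at hmem2
    convert hmem2 using 1
    module
  · intro g x t
    have hfix : g • (v₀ + (v₁ : L)) = v₀ + (v₁ : L) := by
      rw [smul_add, hv₀fix g, ← hsval g v₁, hv₁fix g]
    have h1 : g • ((1 - t) • x) = (1 - t) • (g • x) := smul_comm g (1 - t) x
    have h2 : g • (t • (v₀ + (v₁ : L))) = t • (v₀ + (v₁ : L)) := by
      rw [smul_comm, hfix]
    conv_rhs => rw [smul_add, h1, h2]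
end
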